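/- Let G ∈ MvPolynomial (Fin 5) ℂ be homogeneous of degree 5 and let r < 0 be real. Then {(p,s) ∈ ℂ × ℂ⁵ : G(s) = 0, (∀ i, p·∂ᵢG(s) = 0), and ‖s‖² − 5|p|² = r} = {(p,s) : (∀ i, ∂ᵢG(s) = 0) and 5|p|² = ‖s‖² − r}, and every point (p,s) of this set satisfies |p|² ≥ −r/5 > 0 (in particular p ≠ 0, so the geometric branch p = 0 is empty). -/

import Mathlib

open MvPolynomial

private lemma euler_monomial (d : Fin 5 →₀ ℕ) (a : ℂ) :
    ∑ i : Fin 5, X i * pderiv i (monomial d a) =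
      (∑ i : Fin 5, d i) • monomial d a := by
  rw [Finset.sum_smul]
  refine Finset.sum_congr rfl fun i _ => ?_
  rw [pderiv_monomial]
  rcases Nat.eq_zero_or_pos (d i) with h | h
  · simp [h]
  · rw [X, monomial_mul, one_mul]
    have hle : Finsupp.single i 1 ≤ d := by rwa [Finsupp.single_le_iff]
    rw [add_tsub_cancel_of_le hle, smul_monomial]
    congr 1
    rw [mul_comm]
    simp [nsmul_eq_mul]

private lemma euler_identity (G : MvPolynomial (Fin 5) ℂ) (hG : G.IsHomogeneous 5) :
    ∑ i : Fin 5, X i * pderiv i G = (5 : ℕ) • G := by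
  conv_lhs => rw [← support_sum_monomial_coeff G]
  conv_rhs => rw [← support_sum_monomial_coeff G]
  rw [Finset.smul_sum]
  simp_rw [map_sum, Finset.mul_sum]
  rw [Finset.sum_comm]
  refine Finset.sum_congr rfl fun d hd => ?_
  rw [euler_monomial d _]
  congr 1
  have hdeg := hG (mem_support_iff.mp hd)
  rw [Finsupp.weight_apply, Finsupp.sum_fintype] at hdeg
  · simpa using hdeg
  · simp

theorem negative_sheet_decomposition
    (G : MvPolynomial (Fin 5) ℂ) (hG : G.IsHomogeneous 5)
    (r : ℝ) (hr : r < 0) :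
    ({ps : ℂ × (Fin 5 → ℂ) |
        MvPolynomial.eval ps.2 G = 0 ∧
        (∀ i : Fin 5, ps.1 * MvPolynomial.eval ps.2 (MvPolynomial.pderiv i G) = 0) ∧
        (∑ i, ‖ps.2 i‖ ^ 2) - 5 * ‖ps.1‖ ^ 2 = r} =
      {ps : ℂ × (Fin 5 → ℂ) |
        (∀ i : Fin 5, MvPolynomial.eval ps.2 (MvPolynomial.pderiv i G) = 0) ∧
        5 * ‖ps.1‖ ^ 2 = (∑ i, ‖ps.2 i‖ ^ 2) - r}) ∧
    ∀ ps : ℂ × (Fin 5 → ℂ),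
      (MvPolynomial.eval ps.2 G = 0 ∧
        (∀ i : Fin 5, ps.1 * MvPolynomial.eval ps.2 (MvPolynomial.pderiv i G) = 0) ∧
        (∑ i, ‖ps.2 i‖ ^ 2) - 5 * ‖ps.1‖ ^ 2 = r) →
      -r / 5 ≤ ‖ps.1‖ ^ 2 ∧ 0 < -r / 5 := by
  have euler : ∀ s : Fin 5 → ℂ,
      ∑ i : Fin 5, s i * MvPolynomial.eval s (pderiv i G) = 5 * MvPolynomial.eval s G := by
    intro s
    have := congrArg (MvPolynomial.eval s) (euler_identity G hG)
    simpa using this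
  have hsum_nonneg : ∀ s : Fin 5 → ℂ, (0:ℝ) ≤ ∑ i, ‖s i‖ ^ 2 := fun s =>
    Finset.sum_nonneg fun i _ => sq_nonneg _
  constructor
  · ext ps
    simp only [Set.mem_setOf_eq]
    constructor
    · rintro ⟨hGz, hpd, hm⟩
      have hp : ps.1 ≠ 0 := by
        intro h
        rw [h] at hm
        simp only [norm_zero] at hm
        have := hsum_nonneg ps.2
        nlinarith [hm]
      refine ⟨fun i => ?_, by linarith⟩
      rcases mul_eq_zero.1 (hpd i) with h | h
      · exact absurd h hp
      · exact h
    · rintro ⟨hd, hm⟩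
      have hGz : MvPolynomial.eval ps.2 G = 0 := by
        have h5 := euler ps.2
        simp only [hd, mul_zero, Finset.sum_const_zero] at h5
        have : (5:ℂ) ≠ 0 := by norm_num
        field_simp at h5
        exact (mul_eq_zero.1 h5.symm).resolve_left this
      exact ⟨hGz, fun i => by rw [hd i, mul_zero], by linarith⟩
  · rintro ps ⟨hGz, hpd, hm⟩
    have := hsum_nonneg ps.2
    constructor <;> nlinarith
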